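/- arXiv:1601.01811 — 4 statements merged into one kernel-verified Lean document; each statement's English description precedes it below -/
import Mathlib

section
/- For every t > 0 the events {β_t = 0} and {τ ≤ t} coincide up to a P-null set, i.e. P({β_t = 0} Δ {τ ≤ t}) = 0. Consequently, {τ ≤ t} ∈ 𝓕ᴾ_t for every t ≥ 0, i.e. τ is a stopping time with respect to the filtration 𝔽ᴾ = (𝓕ᴾ_t)_{t≥0}. -/
open MeasureTheory ProbabilityTheory

noncomputable section

/-- The information process: Brownian bridge between 0 and 0 on the random interval `[0, τ]`,
`β_t = W_t - (t / (τ ∨ t)) W_{τ ∨ t}`. -/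
def infoProc {Ω : Type*} (W : ℝ → Ω → ℝ) (τ : Ω → ℝ) (t : ℝ) (ω : Ω) : ℝ :=
  W t ω - (t / max (τ ω) t) * W (max (τ ω) t) ω

/-- `W` is a standard Brownian motion on `(Ω, 𝓕, P)`: it starts at `0`, has continuous paths,
independent increments, and Gaussian increments `W_t - W_s ∼ N(0, t - s)`. -/
structure IsStdBrownianMotion {Ω : Type*} [MeasurableSpace Ω] (P : Measure Ω)
    (W : ℝ → Ω → ℝ) : Prop where
  meas : ∀ t, Measurable (W t)
  init : ∀ ω, W 0 ω = 0
  cont : ∀ ω, Continuous fun t => W t ω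
  indep_incr : ∀ (n : ℕ) (t : ℕ → ℝ), Monotone t →
    iIndepFun
      (fun i : Fin n => fun ω => W (t (i + 1)) ω - W (t i) ω) P
  gauss_incr : ∀ s t : ℝ, 0 ≤ s → s ≤ t →
    Measure.map (fun ω => W t ω - W s ω) P = gaussianReal 0 (Real.toNNReal (t - s))

/-- The σ-algebra `σ(X)` generated by a real random variable `X`. -/
def sigmaGen {Ω : Type*} (X : Ω → ℝ) : MeasurableSpace Ω :=
  MeasurableSpace.comap X inferInstance

/-- The natural filtration of a process: `𝓕⁰_t = σ(β_s, 0 ≤ s ≤ t)`. -/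
def natFilt {Ω : Type*} (β : ℝ → Ω → ℝ) (t : ℝ) : MeasurableSpace Ω :=
  ⨆ s ∈ Set.Icc (0 : ℝ) t, sigmaGen (β s)

/-- The σ-algebra `𝓝_P` generated by the `P`-null sets. -/
def nullSigma {Ω : Type*} [MeasurableSpace Ω] (P : Measure Ω) : MeasurableSpace Ω :=
  MeasurableSpace.generateFrom {s : Set Ω | P s = 0}

/-- The completed natural filtration `𝓕ᴾ_t = 𝓕⁰_t ∨ 𝓝_P`. -/
def complFilt {Ω : Type*} [MeasurableSpace Ω] (P : Measure Ω) (β : ℝ → Ω → ℝ)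
    (t : ℝ) : MeasurableSpace Ω :=
  natFilt β t ⊔ nullSigma P

/-- The filtration `𝓕^β_t = 𝓕⁰_{t+} ∨ 𝓝_P`, where `𝓕⁰_{t+} = ⋂_{u > t} 𝓕⁰_u`. -/
def rightFilt {Ω : Type*} [MeasurableSpace Ω] (P : Measure Ω) (β : ℝ → Ω → ℝ)
    (t : ℝ) : MeasurableSpace Ω :=
  (⨅ u ∈ Set.Ioi t, natFilt β u) ⊔ nullSigma P

/-- The Gaussian density `p(s, x, y)` with variance `s` and mean `y`, evaluated at `x`. -/
def gaussDens (s x y : ℝ) : ℝ :=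
  (Real.sqrt (2 * Real.pi * s))⁻¹ * Real.exp (-(x - y) ^ 2 / (2 * s))

/-- For `t > 0`, the density `φ_t(r, x)` of the Brownian bridge of length `r` at time `t < r`,
and `0` for `r ≤ t`. -/
def phi (t r x : ℝ) : ℝ :=
  if t < r then gaussDens (t * (r - t) / r) x 0 else 0

/-- The a posteriori density `φ̂_t(r, x) = φ_t(r, x) / ∫_{(t,∞)} φ_t(v, x) μ(dv)` where `μ`
is the law of `τ`. -/
def phiHat (μ : Measure ℝ) (t r x : ℝ) : ℝ :=
  phi t r x / ∫ v in Set.Ioi t, phi t v x ∂μ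

lemma gauss_lin_null {Ω : Type*} [MeasurableSpace Ω] (P : Measure Ω)
    [IsProbabilityMeasure P] (W : ℝ → Ω → ℝ) (hW : IsStdBrownianMotion P W)
    {t r : ℝ} (ht : 0 < t) (htr : t < r) :
    P {ω | W t ω - (t / r) * W r ω = 0} = 0 := by
  have hr : 0 < r := ht.trans htr
  have hc : 0 < t / r := div_pos ht hr
  set ts : ℕ → ℝ := fun n => if n = 0 then 0 else if n = 1 then t else r with hts_def
  have hmono : Monotone ts := by
    apply monotone_nat_of_le_succ
    intro n
    rcases n with _ | _ | n <;> simp [hts_def] <;> linarith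
  have hind : IndepFun (fun ω => W t ω - W 0 ω) (fun ω => W r ω - W t ω) P := by
    have h := (hW.indep_incr 2 ts hmono).indepFun (show (0 : Fin 2) ≠ 1 by decide)
    simpa [hts_def] using h
  have hU : Measurable fun ω => W t ω - W 0 ω := (hW.meas t).sub (hW.meas 0)
  have hV : Measurable fun ω => W r ω - W t ω := (hW.meas r).sub (hW.meas t)
  have hmap := (indepFun_iff_map_prod_eq_prod_map_map hU.aemeasurable hV.aemeasurable).mp hind
  have hUlaw : P.map (fun ω => W t ω - W 0 ω) = gaussianReal 0 (Real.toNNReal t) := by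
    simpa using hW.gauss_incr 0 t le_rfl ht.le
  have hVlaw : P.map (fun ω => W r ω - W t ω) = gaussianReal 0 (Real.toNNReal (r - t)) :=
    hW.gauss_incr t r ht.le htr.le
  set T : Set (ℝ × ℝ) := {p | (1 - t / r) * p.1 - (t / r) * p.2 = 0} with hT_def
  have hT : MeasurableSet T :=
    ((measurable_fst.const_mul (1 - t / r)).sub (measurable_snd.const_mul (t / r)))
      (measurableSet_singleton 0)
  have hset : {ω | W t ω - (t / r) * W r ω = 0} =
      (fun ω => (W t ω - W 0 ω, W r ω - W t ω)) ⁻¹' T := by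
    ext ω
    simp only [Set.mem_setOf_eq, Set.mem_preimage, hT_def, hW.init ω, sub_zero]
    constructor <;> intro h <;> nlinarith [h]
  have hsing : ∀ x : ℝ, gaussianReal 0 (Real.toNNReal (r - t)) {x} = 0 := fun x =>
    gaussianReal_absolutelyContinuous 0 (Real.toNNReal_pos.mpr (by linarith)).ne'
      (measure_singleton x)
  have hslice : ∀ u : ℝ,
      gaussianReal 0 (Real.toNNReal (r - t)) (Prod.mk u ⁻¹' T) = 0 := by
    intro u
    refine measure_mono_null ?_ (hsing (((1 - t / r) * u) / (t / r)))
    intro v hv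
    simp only [Set.mem_preimage, Set.mem_setOf_eq, hT_def] at hv
    simp only [Set.mem_singleton_iff]
    rw [eq_div_iff hc.ne']
    linarith
  rw [hset, ← Measure.map_apply (hU.prodMk hV) hT, hmap, hUlaw, hVlaw,
    Measure.prod_apply hT]
  rw [lintegral_congr hslice, lintegral_zero]

lemma joint_null_aux {Ω : Type*} {mΩ : MeasurableSpace Ω} [m : MeasurableSpace Ω]
    (hm : m ≤ mΩ) (P : @Measure Ω mΩ) [IsProbabilityMeasure P]
    (W : ℝ → Ω → ℝ) (hWc : ∀ ω, Continuous fun s => W s ω)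
    (hWm : ∀ s, Measurable (W s))
    (τ : Ω → ℝ) (hτ : @Measurable Ω ℝ mΩ _ τ)
    (hind : ∀ (A : Set ℝ) (B : Set Ω), MeasurableSet A → MeasurableSet B →
      P (τ ⁻¹' A ∩ B) = P (τ ⁻¹' A) * P B)
    {t : ℝ} (hzero : ∀ r, t < r → P {ω | W t ω - (t / r) * W r ω = 0} = 0) :
    P {ω | t < τ ω ∧ W t ω - (t / τ ω) * W (τ ω) ω = 0} = 0 := by
  have hjoint : Measurable (Function.uncurry W) :=
    measurable_uncurry_of_continuous_of_measurable hWc hWm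
  set S : Set (ℝ × Ω) :=
    {p | t < p.1 ∧ W t p.2 - (t / p.1) * Function.uncurry W p = 0} with hS_def
  have hS : MeasurableSet S := by
    have h1 : MeasurableSet {p : ℝ × Ω | t < p.1} := measurable_fst measurableSet_Ioi
    have h2 : MeasurableSet
        {p : ℝ × Ω | W t p.2 - (t / p.1) * Function.uncurry W p = 0} :=
      (((hWm t).comp measurable_snd).sub
        ((measurable_const.div measurable_fst).mul hjoint)) (measurableSet_singleton 0)
    rw [hS_def, Set.setOf_and]
    exact h1.inter h2
  haveI : IsFiniteMeasure (P.trim hm) := isFiniteMeasure_trim hm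
  haveI : IsProbabilityMeasure (@Measure.map Ω ℝ mΩ _ τ P) :=
    @Measure.isProbabilityMeasure_map Ω ℝ mΩ _ P _ τ (@Measurable.aemeasurable Ω ℝ mΩ _ τ P hτ)
  have hΦ : @Measurable Ω (ℝ × Ω) mΩ _ (fun ω => (τ ω, ω)) :=
    hτ.prodMk (measurable_id'' hm)
  have hprod : @Measure.map Ω (ℝ × Ω) mΩ _ (fun ω => (τ ω, ω)) P =
      (@Measure.map Ω ℝ mΩ _ τ P).prod (P.trim hm) := by
    refine (Measure.prod_eq fun A B hA hB => ?_).symm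
    rw [Measure.map_apply hΦ (hA.prod hB), Measure.map_apply hτ hA,
      trim_measurableSet_eq hm hB]
    have hpre : (fun ω => (τ ω, ω)) ⁻¹' (A ×ˢ B) = (τ ⁻¹' A) ∩ B := rfl
    rw [hpre]
    exact hind A B hA hB
  have key : P ((fun ω => (τ ω, ω)) ⁻¹' S) = 0 := by
    rw [← Measure.map_apply hΦ hS, hprod, Measure.prod_apply hS]
    have hz : ∀ r : ℝ, (P.trim hm) (Prod.mk r ⁻¹' S) = 0 := by
      intro r
      by_cases hr : t < r
      · have hsl : Prod.mk r ⁻¹' S = {ω | W t ω - (t / r) * W r ω = 0} := by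
          ext ω; simp [hS_def, hr, Function.uncurry]
        have hmeas_sl : MeasurableSet {ω | W t ω - (t / r) * W r ω = 0} :=
          ((hWm t).sub ((hWm r).const_mul (t / r))) (measurableSet_singleton 0)
        rw [hsl, trim_measurableSet_eq hm hmeas_sl]
        exact hzero r hr
      · have hempty : Prod.mk r ⁻¹' S = ∅ := by
          ext ω; simp [hS_def, hr]
        rw [hempty]
        exact measure_empty
    rw [lintegral_congr hz, lintegral_zero]
  exact key

lemma joint_null {Ω : Type*} [MeasurableSpace Ω] (P : Measure Ω)
    [IsProbabilityMeasure P] (W : ℝ → Ω → ℝ) (hW : IsStdBrownianMotion P W)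
    (τ : Ω → ℝ) (hτ_meas : Measurable τ)
    (hindep : Indep (sigmaGen τ) (⨆ s : ℝ, sigmaGen (W s)) P)
    {t : ℝ} (ht : 0 < t) :
    P {ω | t < τ ω ∧ W t ω - (t / τ ω) * W (τ ω) ω = 0} = 0 := by
  have hm : (⨆ s : ℝ, sigmaGen (W s)) ≤ ‹MeasurableSpace Ω› :=
    iSup_le fun s => measurable_iff_comap_le.mp (hW.meas s)
  have hWm : ∀ s, Measurable[⨆ s : ℝ, sigmaGen (W s)] (W s) := fun s =>
    measurable_iff_comap_le.mpr (le_iSup (fun s => sigmaGen (W s)) s)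
  exact joint_null_aux (m := ⨆ s : ℝ, sigmaGen (W s)) hm P W hW.cont hWm τ hτ_meas
    (fun A B hA hB => ((Indep_iff _ _ _).mp hindep) _ _ ⟨A, hA, rfl⟩ hB)
    (fun r hr => gauss_lin_null P W hW ht hr)

/-- For every `t > 0` the events `{β_t = 0}` and `{τ ≤ t}` coincide up to a `P`-null set;
consequently `{τ ≤ t} ∈ 𝓕ᴾ_t` for every `t ≥ 0`, i.e. `τ` is an `𝔽ᴾ`-stopping time. -/
theorem tau_stoppingTime_complFilt {Ω : Type*} [MeasurableSpace Ω] (P : Measure Ω)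
    [IsProbabilityMeasure P] [P.IsComplete]
    (W : ℝ → Ω → ℝ) (hW : IsStdBrownianMotion P W)
    (τ : Ω → ℝ) (hτ_meas : Measurable τ) (hτ_pos : ∀ ω, 0 < τ ω)
    (hindep : Indep (sigmaGen τ) (⨆ t : ℝ, sigmaGen (W t)) P) :
    (∀ t : ℝ, 0 < t →
        P (symmDiff {ω | infoProc W τ t ω = 0} {ω | τ ω ≤ t}) = 0) ∧
      ∀ t : ℝ, 0 ≤ t →
        MeasurableSet[complFilt P (infoProc W τ) t] {ω | τ ω ≤ t} := by
  have part1 : ∀ t : ℝ, 0 < t →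
      P (symmDiff {ω | infoProc W τ t ω = 0} {ω | τ ω ≤ t}) = 0 := by
    intro t ht
    have hE := joint_null P W hW τ hτ_meas hindep ht
    have hBA : {ω | τ ω ≤ t} ⊆ {ω | infoProc W τ t ω = 0} := by
      intro ω hω
      simp only [Set.mem_setOf_eq] at *
      unfold infoProc
      rw [max_eq_right hω, div_self ht.ne', one_mul, sub_self]
    have hAB : {ω | infoProc W τ t ω = 0} \ {ω | τ ω ≤ t} ⊆
        {ω | t < τ ω ∧ W t ω - (t / τ ω) * W (τ ω) ω = 0} := by
      rintro ω ⟨h1, h2⟩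
      simp only [Set.mem_setOf_eq] at *
      have hlt : t < τ ω := lt_of_not_ge h2
      refine ⟨hlt, ?_⟩
      unfold infoProc at h1
      rwa [max_eq_left hlt.le] at h1
    have hd1 : P ({ω | infoProc W τ t ω = 0} \ {ω | τ ω ≤ t}) = 0 :=
      le_antisymm (hE ▸ measure_mono hAB) (zero_le')
    have hd2 : P ({ω | τ ω ≤ t} \ {ω | infoProc W τ t ω = 0}) = 0 := by
      rw [Set.diff_eq_empty.mpr hBA]
      exact measure_empty
    refine le_antisymm ?_ (zero_le')
    calc P (symmDiff {ω | infoProc W τ t ω = 0} {ω | τ ω ≤ t})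
        ≤ P ({ω | infoProc W τ t ω = 0} \ {ω | τ ω ≤ t}) +
          P ({ω | τ ω ≤ t} \ {ω | infoProc W τ t ω = 0}) := by
          rw [Set.symmDiff_def]
          exact measure_union_le _ _
      _ = 0 := by rw [hd1, hd2, add_zero]
  refine ⟨part1, fun t ht => ?_⟩
  rcases eq_or_lt_of_le ht with rfl | ht'
  · have hempty : {ω | τ ω ≤ (0 : ℝ)} = ∅ := by
      ext ω
      simp only [Set.mem_setOf_eq, Set.mem_empty_iff_false, iff_false, not_le]
      exact hτ_pos ω
    rw [hempty]
    exact @MeasurableSet.empty Ω (complFilt P (infoProc W τ) 0)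
  · have hA : MeasurableSet[natFilt (infoProc W τ) t] {ω | infoProc W τ t ω = 0} := by
      have hle : sigmaGen (infoProc W τ t) ≤ natFilt (infoProc W τ) t :=
        le_biSup (fun s => sigmaGen (infoProc W τ s)) ⟨ht'.le, le_refl t⟩
      exact hle _ ⟨{0}, measurableSet_singleton 0, rfl⟩
    have hC : MeasurableSet[nullSigma P]
        (symmDiff {ω | infoProc W τ t ω = 0} {ω | τ ω ≤ t}) :=
      MeasurableSpace.measurableSet_generateFrom (part1 t ht')
    have hA' : MeasurableSet[complFilt P (infoProc W τ) t] {ω | infoProc W τ t ω = 0} :=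
      (le_sup_left : natFilt (infoProc W τ) t ≤ _) _ hA
    have hC' : MeasurableSet[complFilt P (infoProc W τ) t]
        (symmDiff {ω | infoProc W τ t ω = 0} {ω | τ ω ≤ t}) :=
      (le_sup_right : nullSigma P ≤ _) _ hC
    have hBeq : {ω | τ ω ≤ t} = symmDiff {ω | infoProc W τ t ω = 0}
        (symmDiff {ω | infoProc W τ t ω = 0} {ω | τ ω ≤ t}) :=
      (symmDiff_symmDiff_cancel_left _ _).symm
    rw [hBeq, Set.symmDiff_def]
    exact (hA'.diff hC').union (hC'.diff hA')
end
end

section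
/- The random time τ is a stopping time with respect to the filtration 𝔽^β = (𝓕^β_t)_{t≥0}, i.e. {τ ≤ t} ∈ 𝓕^β_t for every t ≥ 0. -/
open MeasureTheory ProbabilityTheory

noncomputable section

theorem key {Ω : Type*} [MeasurableSpace Ω] (P : Measure Ω) [IsProbabilityMeasure P]
    (W : ℝ → Ω → ℝ) (hW : IsStdBrownianMotion P W) (q q' : ℝ) (hq : 0 < q) (hqq : q < q') :
    P {ω | q' * W q ω = q * W q' ω} = 0 := by
  set A : Ω → ℝ := W q with hA_def
  set B : Ω → ℝ := fun ω => W q' ω - W q ω with hB_def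
  have hA : Measurable A := hW.meas q
  have hB : Measurable B := (hW.meas q').sub (hW.meas q)
  -- independence of increments at times 0, q, q'
  set u : ℕ → ℝ := fun n => if n = 0 then 0 else if n = 1 then q else q' with hu_def
  have humono : Monotone u := by
    refine monotone_nat_of_le_succ fun n => ?_
    match n with
    | 0 => simpa [hu_def] using hq.le
    | 1 => simpa [hu_def] using hqq.le
    | (k+2) => simp [hu_def]
  have hiIndep := hW.indep_incr 2 u humono
  have hIndep01 : IndepFun (fun ω => W (u 1) ω - W (u 0) ω)
      (fun ω => W (u 2) ω - W (u 1) ω) P := by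
    have := hiIndep.indepFun (i := 0) (j := 1) (by decide)
    simpa using this
  have hfun0 : (fun ω => W (u 1) ω - W (u 0) ω) = A := by
    funext ω
    simp [hu_def, hA_def, hW.init ω]
  have hfun1 : (fun ω => W (u 2) ω - W (u 1) ω) = B := by
    funext ω
    simp [hu_def, hB_def]
  rw [hfun0, hfun1] at hIndep01
  -- laws
  have hlawB : P.map B = gaussianReal 0 (Real.toNNReal (q' - q)) := by
    rw [hB_def]; exact hW.gauss_incr q q' hq.le hqq.le
  -- product law
  have hprod : P.map (fun ω => (A ω, B ω)) = (P.map A).prod (P.map B) :=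
    (indepFun_iff_map_prod_eq_prod_map_map hA.aemeasurable hB.aemeasurable).mp hIndep01
  -- the event as a preimage
  have hset : {ω | q' * W q ω = q * W q' ω}
      = (fun ω => (A ω, B ω)) ⁻¹' {p : ℝ × ℝ | (q' - q) * p.1 = q * p.2} := by
    ext ω
    simp only [Set.mem_setOf_eq, Set.mem_preimage, hA_def, hB_def]
    constructor <;> intro h <;> nlinarith [h]
  have hD : MeasurableSet {p : ℝ × ℝ | (q' - q) * p.1 = q * p.2} :=
    measurableSet_eq_fun (measurable_fst.const_mul _) (measurable_snd.const_mul _)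
  rw [hset, ← Measure.map_apply (hA.prodMk hB) hD, hprod, Measure.prod_apply hD]
  have hnull : ∀ a : ℝ, (P.map B) {b : ℝ | (q' - q) * a = q * b} = 0 := by
    intro a
    have hsub : {b : ℝ | (q' - q) * a = q * b} ⊆ {(q' - q) * a / q} := by
      intro b hb
      simp only [Set.mem_setOf_eq] at hb
      simp only [Set.mem_singleton_iff]
      field_simp
      linarith [hb]
    refine measure_mono_null hsub ?_
    rw [hlawB]
    have hv : Real.toNNReal (q' - q) ≠ 0 := by
      simp [Real.toNNReal_eq_zero]; linarith
    exact gaussianReal_absolutelyContinuous 0 hv (measure_singleton _)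
  simp only [Set.preimage_setOf_eq]
  simp [hnull]


/-- The random time `τ` is a stopping time with respect to the filtration `𝔽^β`:
`{τ ≤ t} ∈ 𝓕^β_t` for every `t ≥ 0`. -/
theorem tau_stoppingTime_rightFilt {Ω : Type*} [MeasurableSpace Ω] (P : Measure Ω)
    [IsProbabilityMeasure P] [P.IsComplete]
    (W : ℝ → Ω → ℝ) (hW : IsStdBrownianMotion P W)
    (τ : Ω → ℝ) (hτ_meas : Measurable τ) (hτ_pos : ∀ ω, 0 < τ ω)
    (hindep : Indep (sigmaGen τ) (⨆ t : ℝ, sigmaGen (W t)) P) :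
    ∀ t : ℝ, 0 ≤ t →
      MeasurableSet[rightFilt P (infoProc W τ) t] {ω | τ ω ≤ t} := by
  intro t ht
  set β : ℝ → Ω → ℝ := infoProc W τ with hβ
  -- the exceptional null set
  set N : Set Ω := ⋃ p : ℚ × ℚ,
    if t < (p.1 : ℝ) ∧ (p.1 : ℝ) < (p.2 : ℝ) then
      ({ω | (p.2 : ℝ) * W p.1 ω = (p.1 : ℝ) * W p.2 ω} ∩ {ω | (p.2 : ℝ) < τ ω})
    else ∅ with hN_def
  have hNnull : P N = 0 := by
    refine measure_iUnion_null fun p => ?_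
    split_ifs with hp
    · exact measure_mono_null Set.inter_subset_left
        (key P W hW p.1 p.2 (lt_of_le_of_lt ht hp.1) hp.2)
    · simp
  -- the approximating sets
  set A : ℕ → Set Ω := fun n =>
    {ω | ∀ q : ℚ, t < (q : ℝ) → (q : ℝ) < t + 1 / ((n : ℝ) + 1) → β q ω = 0} with hA_def
  set S : Set Ω := ⋃ n, A n with hS_def
  have hAmono : Monotone A := by
    intro n m hnm ω hω q hq1 hq2
    refine hω q hq1 (lt_of_lt_of_le hq2 ?_)
    have h1 : (0:ℝ) < (n : ℝ) + 1 := by positivity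
    have h2 : ((n : ℝ) + 1) ≤ ((m : ℝ) + 1) := by
      have := (Nat.cast_le (α := ℝ)).mpr hnm; linarith
    have := one_div_le_one_div_of_le h1 h2
    linarith
  -- S belongs to every natFilt β u for u > t
  have hSmem : ∀ u ∈ Set.Ioi t, MeasurableSet[natFilt β u] S := by
    intro u hu
    rw [Set.mem_Ioi] at hu
    obtain ⟨n₀, hn₀⟩ := exists_nat_one_div_lt (show (0:ℝ) < u - t by linarith)
    have hStail : S = ⋃ n, A (n + n₀) := by
      apply Set.Subset.antisymm
      · exact Set.iUnion_subset fun n =>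
          (hAmono (Nat.le_add_right n n₀)).trans (Set.subset_iUnion (fun k => A (k + n₀)) n)
      · exact Set.iUnion_subset fun n => Set.subset_iUnion A (n + n₀)
    rw [hStail]
    refine MeasurableSet.iUnion fun n => ?_
    have hArep : A (n + n₀) = ⋂ q : ℚ,
        {ω | t < (q : ℝ) → (q : ℝ) < t + 1 / (((n + n₀ : ℕ) : ℝ) + 1) → β q ω = 0} := by
      ext ω
      simp [hA_def, Set.mem_iInter]
    rw [hArep]
    refine MeasurableSet.iInter fun q => ?_
    by_cases hq : t < (q : ℝ) ∧ (q : ℝ) < t + 1 / (((n + n₀ : ℕ) : ℝ) + 1)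
    · have hrw : {ω | t < (q : ℝ) → (q : ℝ) < t + 1 / (((n + n₀ : ℕ) : ℝ) + 1) → β q ω = 0}
          = β (q : ℝ) ⁻¹' {0} := by
        ext ω
        simp only [Set.mem_setOf_eq, Set.mem_preimage, Set.mem_singleton_iff]
        exact ⟨fun h => h hq.1 hq.2, fun h _ _ => h⟩
      rw [hrw]
      have hqIcc : (q : ℝ) ∈ Set.Icc (0 : ℝ) u := by
        constructor
        · exact le_trans ht hq.1.le
        · have hdiv : (1:ℝ) / (((n + n₀ : ℕ) : ℝ) + 1) ≤ 1 / ((n₀ : ℝ) + 1) := by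
            refine one_div_le_one_div_of_le (by positivity) ?_
            push_cast; linarith [Nat.cast_nonneg (α := ℝ) n]
          linarith [hq.2]
      have hle : sigmaGen (β (q : ℝ)) ≤ natFilt β u :=
        le_iSup₂ (f := fun s (_ : s ∈ Set.Icc (0:ℝ) u) => sigmaGen (β s)) (q : ℝ) hqIcc
      exact hle _ (MeasurableSpace.measurableSet_comap.mpr ⟨{0}, measurableSet_singleton 0, rfl⟩)
    · have hrw : {ω | t < (q : ℝ) → (q : ℝ) < t + 1 / (((n + n₀ : ℕ) : ℝ) + 1) → β q ω = 0}
          = Set.univ := by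
        ext ω
        simp only [Set.mem_setOf_eq, Set.mem_univ, iff_true]
        intro h1 h2
        exact absurd ⟨h1, h2⟩ hq
      rw [hrw]
      exact MeasurableSet.univ
  -- {τ ≤ t} ⊆ S
  have h1 : {ω | τ ω ≤ t} ⊆ S := by
    intro ω hω
    refine Set.mem_iUnion.mpr ⟨0, ?_⟩
    intro q hq1 _
    have hq0 : (0:ℝ) < q := lt_of_le_of_lt ht hq1
    have hτq : τ ω ≤ (q : ℝ) := le_of_lt (lt_of_le_of_lt hω hq1)
    show infoProc W τ (q : ℝ) ω = 0
    rw [infoProc, max_eq_right hτq, div_self hq0.ne']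
    ring
  -- on S, {t < τ} is contained in N
  have h2 : ∀ ω ∈ S, t < τ ω → ω ∈ N := by
    intro ω hω hτ
    obtain ⟨n, hn⟩ := Set.mem_iUnion.mp hω
    have hεpos : (0:ℝ) < 1 / ((n : ℝ) + 1) := by positivity
    have hε : t < min (τ ω) (t + 1 / ((n : ℝ) + 1)) := lt_min hτ (by linarith)
    obtain ⟨q, hq1, hq2⟩ := exists_rat_btwn hε
    obtain ⟨q', hq1', hq2'⟩ := exists_rat_btwn hq2
    have hqτ : (q : ℝ) < τ ω :=
      lt_of_lt_of_le (hq1'.trans hq2') (min_le_left _ _)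
    have hq'τ : (q' : ℝ) < τ ω := lt_of_lt_of_le hq2' (min_le_left _ _)
    have hqb : (q : ℝ) < t + 1 / ((n : ℝ) + 1) :=
      lt_of_lt_of_le (hq1'.trans hq2') (min_le_right _ _)
    have hq'b : (q' : ℝ) < t + 1 / ((n : ℝ) + 1) :=
      lt_of_lt_of_le hq2' (min_le_right _ _)
    have htq' : t < (q' : ℝ) := hq1.trans hq1'
    have hτpos' : (0:ℝ) < τ ω := hτ_pos ω
    have e1 : W (q : ℝ) ω = ((q : ℝ) / τ ω) * W (τ ω) ω := by
      have hz := hn q hq1 hqb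
      have hz' : infoProc W τ (q : ℝ) ω = 0 := hz
      rw [infoProc, max_eq_left hqτ.le] at hz'
      linarith
    have e2 : W (q' : ℝ) ω = ((q' : ℝ) / τ ω) * W (τ ω) ω := by
      have hz := hn q' htq' hq'b
      have hz' : infoProc W τ (q' : ℝ) ω = 0 := hz
      rw [infoProc, max_eq_left hq'τ.le] at hz'
      linarith
    rw [hN_def]
    refine Set.mem_iUnion.mpr ⟨(q, q'), ?_⟩
    rw [if_pos ⟨hq1, (by exact_mod_cast hq1' : ((q:ℚ):ℝ) < ((q':ℚ):ℝ))⟩]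
    refine ⟨?_, hq'τ⟩
    show (q' : ℝ) * W (q : ℝ) ω = (q : ℝ) * W (q' : ℝ) ω
    rw [e1, e2]
    ring
  -- decomposition of {τ ≤ t}
  have heq : {ω | τ ω ≤ t} = (S ∩ Nᶜ) ∪ ({ω | τ ω ≤ t} ∩ N) := by
    apply Set.Subset.antisymm
    · intro ω hω
      by_cases hN : ω ∈ N
      · exact Or.inr ⟨hω, hN⟩
      · exact Or.inl ⟨h1 hω, hN⟩
    · rintro ω (⟨hS, hN⟩ | ⟨hω, _⟩)
      · by_contra h
        simp only [Set.mem_setOf_eq, not_le] at h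
        exact hN (h2 ω hS h)
      · exact hω
  rw [heq]
  -- measurability in rightFilt
  have hSinf : MeasurableSet[⨅ u ∈ Set.Ioi t, natFilt β u] S :=
    MeasurableSpace.measurableSet_iInf.mpr fun u =>
      MeasurableSpace.measurableSet_iInf.mpr fun hu => hSmem u hu
  have hle1 : (⨅ u ∈ Set.Ioi t, natFilt β u) ≤ rightFilt P β t := le_sup_left
  have hle2 : nullSigma P ≤ rightFilt P β t := le_sup_right
  have hSr : MeasurableSet[rightFilt P β t] S := hle1 _ hSinf
  have hNr : MeasurableSet[rightFilt P β t] N :=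
    hle2 _ (MeasurableSpace.measurableSet_generateFrom hNnull)
  have hZr : MeasurableSet[rightFilt P β t] ({ω | τ ω ≤ t} ∩ N) :=
    hle2 _ (MeasurableSpace.measurableSet_generateFrom
      (measure_mono_null Set.inter_subset_right hNnull))
  exact (hSr.inter hNr.compl).union hZr
end
end

section
/- Suppose P(τ > ε) = 1 for some ε > 0 and let (t_n)_{n∈ℕ} be a strictly decreasing sequence with 0 < t_n < ε and t_n ↓ 0. Then: (a) P-almost surely there exists a finite constant K = K(ε, ω) such that φ̂_{t_n}(r, β_{t_n}(ω)) ≤ K for all n ∈ ℕ and for P_τ-almost every r; (b) for every r > 0, lim_{n→∞} φ̂_{t_n}(r, β_{t_n}) = 1 P-almost surely. -/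
open MeasureTheory ProbabilityTheory

noncomputable section

open Filter

lemma phi_nonneg (t r x : ℝ) : 0 ≤ phi t r x := by
  unfold phi gaussDens
  split
  · positivity
  · exact le_refl 0

lemma phi_pos {t r : ℝ} (ht : 0 < t) (htr : t < r) (x : ℝ) : 0 < phi t r x := by
  have hr : 0 < r := ht.trans htr
  have h1 : 0 < r - t := sub_pos.2 htr
  unfold phi gaussDens
  rw [if_pos htr]
  have hs : 0 < t * (r - t) / r := by positivity
  positivity

lemma phi_meas (t x : ℝ) : Measurable fun v => phi t v x := by
  unfold phi gaussDens
  have m : Measurable fun v : ℝ => t * (v - t) / v :=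
    (measurable_const.mul (measurable_id.sub measurable_const)).div measurable_id
  refine Measurable.ite measurableSet_Ioi ?_ measurable_const
  exact ((Real.continuous_sqrt.measurable.comp (m.const_mul _)).inv).mul
    (Real.continuous_exp.measurable.comp (measurable_const.div (m.const_mul _)))

lemma g_meas (t r x : ℝ) : Measurable fun v : ℝ =>
    Real.sqrt (v * (r - t) / (r * (v - t))) *
      Real.exp (x ^ 2 / 2 * (1 / (r - t) - 1 / (v - t))) := by
  have m1 : Measurable fun v : ℝ => v * (r - t) / (r * (v - t)) :=
    (measurable_id.mul_const _).div (measurable_const.mul (measurable_id.sub measurable_const))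
  have m2 : Measurable fun v : ℝ => x ^ 2 / 2 * (1 / (r - t) - 1 / (v - t)) :=
    measurable_const.mul (measurable_const.sub
      (measurable_const.div (measurable_id.sub measurable_const)))
  exact (Real.continuous_sqrt.measurable.comp m1).mul (Real.continuous_exp.measurable.comp m2)

lemma phi_eq_mul {t r v : ℝ} (ht : 0 < t) (htr : t < r) (htv : t < v) (x : ℝ) :
    phi t v x = phi t r x *
      (Real.sqrt (v * (r - t) / (r * (v - t))) *
        Real.exp (x ^ 2 / 2 * (1 / (r - t) - 1 / (v - t)))) := by
  have hr : 0 < r := ht.trans htr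
  have hv : 0 < v := ht.trans htv
  have hrt : 0 < r - t := sub_pos.2 htr
  have hvt : 0 < v - t := sub_pos.2 htv
  have hπ := Real.pi_pos
  unfold phi gaussDens
  rw [if_pos htv, if_pos htr]
  have hA : (0:ℝ) < 2 * Real.pi * (t * (r - t) / r) := by positivity
  have hB : (0:ℝ) < 2 * Real.pi * (t * (v - t) / v) := by positivity
  have h1 : v * (r - t) / (r * (v - t)) =
      (2 * Real.pi * (t * (r - t) / r)) / (2 * Real.pi * (t * (v - t) / v)) := by
    field_simp
  have key : -(x - 0) ^ 2 / (2 * (t * (v - t) / v)) =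
      -(x - 0) ^ 2 / (2 * (t * (r - t) / r)) + x ^ 2 / 2 * (1 / (r - t) - 1 / (v - t)) := by
    field_simp
    ring
  rw [key, Real.exp_add, h1, Real.sqrt_div hA.le]
  have hsA : Real.sqrt (2 * Real.pi * (t * (r - t) / r)) ≠ 0 := by positivity
  have hsB : Real.sqrt (2 * Real.pi * (t * (v - t) / v)) ≠ 0 := by positivity
  field_simp

lemma Ioi_ae_eq {μ : Measure ℝ} [IsProbabilityMeasure μ] {ε t : ℝ}
    (hμε : μ (Set.Ioi ε) = 1) (ht : t < ε) :
    (Set.Ioi t : Set ℝ) =ᵐ[μ] Set.Ioi ε := by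
  have hae : ∀ᵐ v ∂μ, v ∈ Set.Ioi ε := by
    rw [ae_iff]
    have h : {v : ℝ | ¬ v ∈ Set.Ioi ε} = (Set.Ioi ε)ᶜ := rfl
    rw [h, measure_compl measurableSet_Ioi (measure_ne_top _ _), hμε, measure_univ]
    simp
  rw [Filter.eventuallyEq_set]
  filter_upwards [hae] with v hv
  exact ⟨fun _ => hv, fun _ => ht.trans hv⟩

lemma phi_integrableOn {μ : Measure ℝ} [IsFiniteMeasure μ] {t ε : ℝ}
    (ht : 0 < t) (htε : t < ε) (x : ℝ) :
    IntegrableOn (fun v => phi t v x) (Set.Ioi ε) μ := by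
  have hε : 0 < ε := ht.trans htε
  have h1 : 0 < ε - t := sub_pos.2 htε
  refine Integrable.mono'
    (integrable_const ((Real.sqrt (2 * Real.pi * (t * (ε - t) / ε)))⁻¹))
    ((phi_meas t x).aestronglyMeasurable) ?_
  rw [ae_restrict_iff' measurableSet_Ioi]
  refine ae_of_all _ fun v hv => ?_
  have hεv : ε < v := hv
  have hv0 : 0 < v := hε.trans hεv
  have h2 : 0 < v - t := by linarith
  have hπ := Real.pi_pos
  rw [Real.norm_eq_abs, abs_of_nonneg (phi_nonneg _ _ _)]
  unfold phi gaussDens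
  rw [if_pos (htε.trans hεv)]
  have hmono : t * (ε - t) / ε ≤ t * (v - t) / v := by
    rw [div_le_div_iff₀ hε hv0]
    nlinarith [mul_pos (mul_pos ht ht) (sub_pos.2 hεv)]
  calc (Real.sqrt (2 * Real.pi * (t * (v - t) / v)))⁻¹ *
        Real.exp (-(x - 0) ^ 2 / (2 * (t * (v - t) / v)))
      ≤ (Real.sqrt (2 * Real.pi * (t * (v - t) / v)))⁻¹ * 1 := by
        refine mul_le_mul_of_nonneg_left ?_ (by positivity)
        rw [Real.exp_le_one_iff]
        apply div_nonpos_of_nonpos_of_nonneg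
        · nlinarith [sq_nonneg (x - 0)]
        · positivity
    _ = (Real.sqrt (2 * Real.pi * (t * (v - t) / v)))⁻¹ := mul_one _
    _ ≤ (Real.sqrt (2 * Real.pi * (t * (ε - t) / ε)))⁻¹ := by
        apply inv_anti₀ (by positivity)
        exact Real.sqrt_le_sqrt (by nlinarith)

lemma phiHat_le_bound {μ : Measure ℝ} [IsProbabilityMeasure μ] {ε t0 t r x M : ℝ}
    (hμε : μ (Set.Ioi ε) = 1) (ht : 0 < t) (htt0 : t ≤ t0) (ht0 : t0 < ε) (hr : ε < r)
    (hM : |x| ≤ M) :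
    phiHat μ t r x ≤ Real.sqrt (ε / (ε - t0)) * Real.exp (M ^ 2 / (2 * (ε - t0))) := by
  set K := Real.sqrt (ε / (ε - t0)) * Real.exp (M ^ 2 / (2 * (ε - t0))) with hKdef
  have hεt0 : 0 < ε - t0 := sub_pos.2 ht0
  have htε : t < ε := lt_of_le_of_lt htt0 ht0
  have hε0 : 0 < ε := ht.trans htε
  have htr : t < r := htε.trans hr
  have hr0 : 0 < r := ht.trans htr
  have hrt : 0 < r - t := sub_pos.2 htr
  have hK : 0 < K :=
    mul_pos (Real.sqrt_pos.2 (div_pos hε0 hεt0)) (Real.exp_pos _)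
  have hφ : 0 < phi t r x := phi_pos ht htr x
  have hM0 : 0 ≤ M := (abs_nonneg x).trans hM
  have hpt : ∀ v ∈ Set.Ioi ε, phi t r x / K ≤ phi t v x := by
    intro v hv
    have hεv : ε < v := hv
    have htv : t < v := htε.trans hεv
    have hv0 : 0 < v := hε0.trans hεv
    have hvt : 0 < v - t := sub_pos.2 htv
    have key : phi t r x ≤ K * phi t v x := by
      rw [phi_eq_mul ht htv htr x]
      have hg : Real.sqrt (r * (v - t) / (v * (r - t))) *
          Real.exp (x ^ 2 / 2 * (1 / (v - t) - 1 / (r - t))) ≤ K := by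
        have h1 : r * (v - t) / (v * (r - t)) ≤ ε / (ε - t0) := by
          rw [div_le_div_iff₀ (by positivity) hεt0]
          have e1 : 0 ≤ t * (v * (r - ε)) :=
            mul_nonneg ht.le (mul_nonneg hv0.le (by linarith))
          have e2 : 0 ≤ t * (r * (ε - t)) :=
            mul_nonneg ht.le (mul_nonneg hr0.le (by linarith))
          have e3 : 0 ≤ r * (v - t) * (t0 - t) :=
            mul_nonneg (mul_nonneg hr0.le hvt.le) (by linarith)
          nlinarith [e1, e2, e3]
        have h2 : x ^ 2 / 2 * (1 / (v - t) - 1 / (r - t)) ≤ M ^ 2 / (2 * (ε - t0)) := by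
          have hx2 : x ^ 2 ≤ M ^ 2 := by nlinarith [abs_nonneg x, sq_abs x]
          have hb : 1 / (v - t) - 1 / (r - t) ≤ 1 / (ε - t0) := by
            have hb1 : 1 / (v - t) ≤ 1 / (ε - t0) :=
              one_div_le_one_div_of_le hεt0 (by linarith)
            have hb2 : 0 < 1 / (r - t) := by positivity
            linarith
          have s1 : x ^ 2 / 2 * (1 / (v - t) - 1 / (r - t)) ≤ x ^ 2 / 2 * (1 / (ε - t0)) :=
            mul_le_mul_of_nonneg_left hb (by positivity)
          have s2 : x ^ 2 / 2 * (1 / (ε - t0)) ≤ M ^ 2 / 2 * (1 / (ε - t0)) :=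
            mul_le_mul_of_nonneg_right (by linarith) (by positivity)
          have s3 : M ^ 2 / 2 * (1 / (ε - t0)) = M ^ 2 / (2 * (ε - t0)) := by
            rw [div_mul_div_comm, mul_one]
          linarith
        exact mul_le_mul (Real.sqrt_le_sqrt h1) (Real.exp_le_exp.2 h2)
          (Real.exp_pos _).le (Real.sqrt_nonneg _)
      rw [mul_comm K]
      exact mul_le_mul_of_nonneg_left hg (phi_nonneg _ _ _)
    exact (div_le_iff₀ hK).2 (key.trans_eq (mul_comm _ _))
  have hDeq : (∫ v in Set.Ioi t, phi t v x ∂μ) = ∫ v in Set.Ioi ε, phi t v x ∂μ :=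
    setIntegral_congr_set (Ioi_ae_eq hμε htε)
  have hIconst : IntegrableOn (fun _ : ℝ => phi t r x / K) (Set.Ioi ε) μ :=
    integrableOn_const (measure_lt_top μ _).ne
  have hD : phi t r x / K ≤ ∫ v in Set.Ioi ε, phi t v x ∂μ := by
    have hmono := setIntegral_mono_on hIconst (phi_integrableOn ht htε x)
      measurableSet_Ioi hpt
    simpa [Measure.real, hμε] using hmono
  have hDpos : 0 < ∫ v in Set.Ioi ε, phi t v x ∂μ :=
    lt_of_lt_of_le (div_pos hφ hK) hD
  unfold phiHat
  rw [hDeq, div_le_iff₀ hDpos, mul_comm]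
  exact (div_le_iff₀ hK).1 hD

lemma tendsto_phiHat {μ : Measure ℝ} [IsProbabilityMeasure μ] {ε r : ℝ} (hε : 0 < ε)
    (hμε : μ (Set.Ioi ε) = 1) (hr : 0 < r)
    {ts : ℕ → ℝ} (hts_pos : ∀ n, 0 < ts n) (hts_lt : ∀ n, ts n < ε)
    (hts_lim : Tendsto ts atTop (nhds 0))
    {x : ℕ → ℝ} (hx : Tendsto x atTop (nhds 0)) :
    Tendsto (fun n => phiHat μ (ts n) r (x n)) atTop (nhds 1) := by
  obtain ⟨M, hMub⟩ := (hx.abs).bddAbove_range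
  have hM : ∀ n, |x n| ≤ M := fun n => hMub (Set.mem_range_self n)
  have hM0 : 0 ≤ M := (abs_nonneg _).trans (hM 0)
  set g : ℕ → ℝ → ℝ := fun n v =>
    Real.sqrt (v * (r - ts n) / (r * (v - ts n))) *
      Real.exp ((x n) ^ 2 / 2 * (1 / (r - ts n) - 1 / (v - ts n))) with hgdef
  have hmin : 0 < min (ε / 2) (r / 2) := lt_min (by linarith) (by linarith)
  have hN : ∀ᶠ n in atTop, ts n < min (ε / 2) (r / 2) :=
    hts_lim.eventually_lt_const hmin
  -- dominated convergence
  have hI : Tendsto (fun n => ∫ v in Set.Ioi ε, g n v ∂μ) atTop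
      (nhds (∫ _ in Set.Ioi ε, (1 : ℝ) ∂μ)) := by
    refine tendsto_integral_filter_of_dominated_convergence
      (fun _ => Real.sqrt 2 * Real.exp (M ^ 2 / r)) ?_ ?_ (integrable_const _) ?_
    · exact Eventually.of_forall fun n => (g_meas (ts n) r (x n)).aestronglyMeasurable
    · filter_upwards [hN] with n hn
      rw [ae_restrict_iff' measurableSet_Ioi]
      refine ae_of_all _ fun v hv => ?_
      have hεv : ε < v := hv
      have ht := hts_pos n
      have htε2 : ts n < ε / 2 := lt_of_lt_of_le hn (min_le_left _ _)
      have htr2 : ts n < r / 2 := lt_of_lt_of_le hn (min_le_right _ _)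
      have hv0 : 0 < v := hε.trans hεv
      have hvt : 0 < v - ts n := by linarith
      have hrt : 0 < r - ts n := by linarith
      rw [Real.norm_eq_abs, abs_of_nonneg (by positivity)]
      have h1 : v * (r - ts n) / (r * (v - ts n)) ≤ 2 := by
        rw [div_le_iff₀ (by positivity)]
        have e1 : 0 ≤ r * (v - 2 * ts n) := mul_nonneg hr.le (by linarith)
        have e2 : 0 ≤ ts n * v := mul_nonneg ht.le hv0.le
        nlinarith [e1, e2]
      have h2 : (x n) ^ 2 / 2 * (1 / (r - ts n) - 1 / (v - ts n)) ≤ M ^ 2 / r := by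
        have hx2 : (x n) ^ 2 ≤ M ^ 2 := by nlinarith [abs_nonneg (x n), sq_abs (x n), hM n]
        have hb1 : 1 / (r - ts n) ≤ 2 / r := by
          rw [div_le_div_iff₀ hrt hr]
          linarith
        have hb0 : 0 < 1 / (v - ts n) := by positivity
        have s1 : (x n) ^ 2 / 2 * (1 / (r - ts n) - 1 / (v - ts n)) ≤
            (x n) ^ 2 / 2 * (1 / (r - ts n)) :=
          mul_le_mul_of_nonneg_left (by linarith) (by positivity)
        have s2 : (x n) ^ 2 / 2 * (1 / (r - ts n)) ≤ M ^ 2 / 2 * (2 / r) := by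
          apply mul_le_mul (by linarith) hb1 (by positivity) (by positivity)
        have s3 : M ^ 2 / 2 * (2 / r) = M ^ 2 / r := by
          field_simp
        linarith
      exact mul_le_mul (Real.sqrt_le_sqrt h1) (Real.exp_le_exp.2 h2)
        (Real.exp_pos _).le (Real.sqrt_nonneg _)
    · rw [ae_restrict_iff' measurableSet_Ioi]
      refine ae_of_all _ fun v hv => ?_
      have hεv : ε < v := hv
      have hv0 : 0 < v := hε.trans hεv
      have h1 : Tendsto (fun n => v * (r - ts n) / (r * (v - ts n))) atTop
          (nhds (v * (r - 0) / (r * (v - 0)))) := by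
        refine Tendsto.div (tendsto_const_nhds.mul (tendsto_const_nhds.sub hts_lim))
          (tendsto_const_nhds.mul (tendsto_const_nhds.sub hts_lim)) ?_
        simp only [sub_zero]
        positivity
      have hvr : v * (r - 0) / (r * (v - 0)) = 1 := by
        rw [sub_zero, sub_zero, mul_comm]
        exact div_self (by positivity)
      rw [hvr] at h1
      have hsq : Tendsto (fun n => Real.sqrt (v * (r - ts n) / (r * (v - ts n)))) atTop
          (nhds 1) := by
        have := (Real.continuous_sqrt.tendsto 1).comp h1
        simpa [Real.sqrt_one, Function.comp_def] using this
      have h2 : Tendsto (fun n => (x n) ^ 2 / 2 * (1 / (r - ts n) - 1 / (v - ts n))) atTop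
          (nhds ((0 : ℝ) ^ 2 / 2 * (1 / (r - 0) - 1 / (v - 0)))) := by
        refine Tendsto.mul ((hx.pow 2).div_const 2) ?_
        refine Tendsto.sub ?_ ?_
        · refine Tendsto.div tendsto_const_nhds (tendsto_const_nhds.sub hts_lim) ?_
          simp only [sub_zero]; positivity
        · refine Tendsto.div tendsto_const_nhds (tendsto_const_nhds.sub hts_lim) ?_
          simp only [sub_zero]; positivity
      have h2' : Tendsto (fun n => (x n) ^ 2 / 2 * (1 / (r - ts n) - 1 / (v - ts n))) atTop
          (nhds 0) := by
        simpa using h2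
      have hexp : Tendsto (fun n =>
          Real.exp ((x n) ^ 2 / 2 * (1 / (r - ts n) - 1 / (v - ts n)))) atTop (nhds 1) := by
        have := (Real.continuous_exp.tendsto 0).comp h2'
        simpa [Real.exp_zero, Function.comp_def] using this
      simpa only [mul_one] using hsq.mul hexp
  have hI1 : Tendsto (fun n => ∫ v in Set.Ioi ε, g n v ∂μ) atTop (nhds 1) := by
    have : (∫ _ in Set.Ioi ε, (1 : ℝ) ∂μ) = 1 := by
      simp [Measure.real, hμε]
    rwa [this] at hI
  have heq : ∀ᶠ n in atTop, phiHat μ (ts n) r (x n) = (∫ v in Set.Ioi ε, g n v ∂μ)⁻¹ := by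
    filter_upwards [hN] with n hn
    have ht := hts_pos n
    have htε : ts n < ε := hts_lt n
    have htr : ts n < r := lt_of_lt_of_le hn (min_le_right _ _) |>.trans (by linarith)
    have hφ : phi (ts n) r (x n) ≠ 0 := (phi_pos ht htr _).ne'
    unfold phiHat
    rw [setIntegral_congr_set (Ioi_ae_eq hμε htε),
      setIntegral_congr_fun measurableSet_Ioi
        (fun v hv => phi_eq_mul ht htr (htε.trans hv) (x n)),
      integral_const_mul]
    exact div_mul_cancel_left₀ hφ _
  have hInv := hI1.inv₀ one_ne_zero
  rw [inv_one] at hInv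
  exact hInv.congr' (heq.mono fun n h => h.symm)

/-- Suppose `P(τ > ε) = 1` and `t_n ↓ 0` with `0 < t_n < ε`. Then (a) `P`-a.s. the family
`φ̂_{t_n}(r, β_{t_n})` is uniformly bounded by a finite constant `K(ε, ω)` for all `n` and
`P_τ`-a.e. `r`, and (b) for every `r > 0`, `φ̂_{t_n}(r, β_{t_n}) → 1` `P`-a.s. -/
theorem phiHat_bounded_and_tendsto_one {Ω : Type*} [MeasurableSpace Ω] (P : Measure Ω)
    [IsProbabilityMeasure P] [P.IsComplete]
    (W : ℝ → Ω → ℝ) (hW : IsStdBrownianMotion P W)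
    (τ : Ω → ℝ) (hτ_meas : Measurable τ) (hτ_pos : ∀ ω, 0 < τ ω)
    (hindep : Indep (sigmaGen τ) (⨆ t : ℝ, sigmaGen (W t)) P)
    (ε : ℝ) (hε : 0 < ε) (hτε : P {ω | ε < τ ω} = 1)
    (ts : ℕ → ℝ) (hts_anti : StrictAnti ts) (hts_mem : ∀ n, 0 < ts n ∧ ts n < ε)
    (hts_lim : Filter.Tendsto ts Filter.atTop (nhds 0)) :
    (∀ᵐ ω ∂P, ∃ K : ℝ, ∀ᵐ r ∂(P.map τ), ∀ n : ℕ,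
        phiHat (P.map τ) (ts n) r (infoProc W τ (ts n) ω) ≤ K) ∧
      ∀ r : ℝ, 0 < r → ∀ᵐ ω ∂P,
        Filter.Tendsto (fun n => phiHat (P.map τ) (ts n) r (infoProc W τ (ts n) ω))
          Filter.atTop (nhds 1) := by
  have hts_pos : ∀ n, 0 < ts n := fun n => (hts_mem n).1
  have hts_lt : ∀ n, ts n < ε := fun n => (hts_mem n).2
  haveI hμ_prob : IsProbabilityMeasure (P.map τ) :=
    Measure.isProbabilityMeasure_map hτ_meas.aemeasurable
  have hμε : (P.map τ) (Set.Ioi ε) = 1 := by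
    rw [Measure.map_apply hτ_meas measurableSet_Ioi]
    exact hτε
  have hae_r : ∀ᵐ r ∂(P.map τ), ε < r := by
    rw [ae_iff]
    have h : {r : ℝ | ¬ ε < r} = (Set.Ioi ε)ᶜ := rfl
    rw [h, measure_compl measurableSet_Ioi (measure_ne_top _ _), hμε, measure_univ]
    simp
  have haeω : ∀ᵐ ω ∂P, ε < τ ω := by
    rw [ae_iff]
    have h : {ω | ¬ ε < τ ω} = {ω | ε < τ ω}ᶜ := rfl
    have hms : MeasurableSet {ω | ε < τ ω} := hτ_meas measurableSet_Ioi
    rw [h, measure_compl hms (measure_ne_top _ _), hτε, measure_univ]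
    simp
  have hβ : ∀ ω, ε < τ ω → Tendsto (fun n => infoProc W τ (ts n) ω) atTop (nhds 0) := by
    intro ω hω
    have hmax : ∀ n, max (τ ω) (ts n) = τ ω :=
      fun n => max_eq_left ((hts_lt n).trans hω).le
    have h1 : Tendsto (fun n => W (ts n) ω) atTop (nhds 0) := by
      have := ((hW.cont ω).tendsto 0).comp hts_lim
      simpa [hW.init ω, Function.comp_def] using this
    have h2 : Tendsto (fun n => ts n / τ ω * W (τ ω) ω) atTop (nhds 0) := by
      have := (hts_lim.div_const (τ ω)).mul_const (W (τ ω) ω)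
      simpa using this
    have h3 := h1.sub h2
    rw [sub_zero] at h3
    refine h3.congr fun n => ?_
    simp [infoProc, hmax n]
  constructor
  · filter_upwards [haeω] with ω hω
    obtain ⟨M, hMub⟩ := ((hβ ω hω).abs).bddAbove_range
    have hM : ∀ n, |infoProc W τ (ts n) ω| ≤ M := fun n => hMub (Set.mem_range_self n)
    refine ⟨Real.sqrt (ε / (ε - ts 0)) * Real.exp (M ^ 2 / (2 * (ε - ts 0))), ?_⟩
    filter_upwards [hae_r] with r hr
    intro n
    exact phiHat_le_bound hμε (hts_pos n) (hts_anti.antitone (Nat.zero_le n)) (hts_lt 0)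
      hr (hM n)
  · intro r hr
    filter_upwards [haeω] with ω hω
    exact tendsto_phiHat hε hμε hr hts_pos hts_lt hts_lim (hβ ω hω)
end
end

section
/- For the process Z defined by Z_t := (β_t/(τ − t))·1_{{t < τ}}, one has E[∫_0^t |Z_s| ds] < ∞ for every t ≥ 0. -/
open MeasureTheory ProbabilityTheory

noncomputable section

section Aux
open Real Filter Set
open scoped NNReal ENNReal

lemma integral_id_mul_exp_neg_mul_sq {b : ℝ} (hb : 0 < b) :
    ∫ x in Set.Ioi (0:ℝ), x * Real.exp (-b * x ^ 2) = (2 * b)⁻¹ := by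
  have hd : ∀ x ∈ Set.Ici (0:ℝ), HasDerivAt (fun y => -(2*b)⁻¹ * Real.exp (-b * y^2))
      (x * Real.exp (-b * x^2)) x := by
    intro x _
    have h1 : HasDerivAt (fun y : ℝ => -b * y^2) (-b * (2*x)) x := by
      simpa [mul_comm] using ((hasDerivAt_pow 2 x).const_mul (-b))
    have h2 := (Real.hasDerivAt_exp (-b * x^2)).comp x h1
    have h3 := h2.const_mul (-(2*b)⁻¹)
    refine h3.congr_deriv ?_
    rw [show -(2*b)⁻¹ * (Real.exp (-b * x^2) * (-b * (2*x)))
      = ((2*b)⁻¹ * (2*b)) * (x * Real.exp (-b * x^2)) by ring,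
      inv_mul_cancel₀ (by positivity), one_mul]
  have hint : IntegrableOn (fun x => x * Real.exp (-b * x^2)) (Set.Ioi 0) :=
    (integrable_mul_exp_neg_mul_sq hb).integrableOn
  have h1 : Tendsto (fun y:ℝ => -b * y^2) atTop atBot := by
    have := (tendsto_pow_atTop (two_ne_zero)).const_mul_atTop hb
    have h2 : Tendsto (fun y:ℝ => -(b * y^2)) atTop atBot := tendsto_neg_atTop_atBot.comp this
    simpa [neg_mul] using h2
  have htend : Tendsto (fun y => -(2*b)⁻¹ * Real.exp (-b * y^2)) atTop (nhds 0) := by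
    have := (Real.tendsto_exp_atBot.comp h1).const_mul (-(2*b)⁻¹)
    simpa using this
  have := integral_Ioi_of_hasDerivAt_of_tendsto' hd hint htend
  rw [this]
  simp [Real.exp_zero]

lemma lintegral_abs_gaussianReal (v : ℝ≥0) :
    ∫⁻ x, ENNReal.ofReal |x| ∂(gaussianReal 0 v) ≤ ENNReal.ofReal (Real.sqrt v) := by
  rcases eq_or_ne v 0 with hv | hv
  · subst hv
    rw [gaussianReal_zero_var, lintegral_dirac]
    simp
  · have hv0 : (0:ℝ) < v := lt_of_le_of_ne v.coe_nonneg (by exact_mod_cast hv.symm)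
    have hb : (0:ℝ) < (2 * (v:ℝ))⁻¹ := by positivity
    rw [gaussianReal_of_var_ne_zero _ hv,
      lintegral_withDensity_eq_lintegral_mul _ (measurable_gaussianPDF _ _)
        (by fun_prop)]
    have heq : ∀ x : ℝ, (gaussianPDF 0 v * fun x => ENNReal.ofReal |x|) x
        = ENNReal.ofReal (gaussianPDFReal 0 v x * |x|) := by
      intro x
      simp [gaussianPDF, ENNReal.ofReal_mul (gaussianPDFReal_nonneg 0 v x)]
    simp only [heq]
    have hfun : ∀ x : ℝ, gaussianPDFReal 0 v x * |x|
        = (Real.sqrt (2 * π * v))⁻¹ * (|x| * Real.exp (-(2 * (v:ℝ))⁻¹ * x ^ 2)) := by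
      intro x
      have : -(x - 0) ^ 2 / (2 * (v:ℝ)) = -(2 * (v:ℝ))⁻¹ * x ^ 2 := by
        rw [sub_zero]; ring
      rw [gaussianPDFReal, this]; ring
    have hint : Integrable (fun x : ℝ => |x| * Real.exp (-(2 * (v:ℝ))⁻¹ * x ^ 2)) := by
      have := (integrable_mul_exp_neg_mul_sq hb).abs
      refine this.congr ?_
      filter_upwards with x
      rw [abs_mul, abs_of_pos (Real.exp_pos _)]
    have hint2 : Integrable (fun x : ℝ => gaussianPDFReal 0 v x * |x|) := by
      simp only [hfun]
      exact hint.const_mul _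
    rw [← ofReal_integral_eq_lintegral_ofReal hint2
      (ae_of_all _ fun x => mul_nonneg (gaussianPDFReal_nonneg 0 v x) (abs_nonneg x))]
    apply ENNReal.ofReal_le_ofReal
    have hval : ∫ x : ℝ, |x| * Real.exp (-(2 * (v:ℝ))⁻¹ * x ^ 2)
        = 2 * (2 * (2 * (v:ℝ))⁻¹)⁻¹ := by
      have habs : ∀ x : ℝ, |x| * Real.exp (-(2 * (v:ℝ))⁻¹ * x ^ 2)
          = |x| * Real.exp (-(2 * (v:ℝ))⁻¹ * |x| ^ 2) := by
        intro x; rw [sq_abs]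
      rw [funext habs]
      rw [integral_comp_abs (f := fun x => x * Real.exp (-(2 * (v:ℝ))⁻¹ * x ^ 2)),
        integral_id_mul_exp_neg_mul_sq hb]
    rw [funext hfun, MeasureTheory.integral_const_mul, hval]
    have h2 : (2 * (2 * (2 * (v:ℝ))⁻¹)⁻¹) = 2 * (v:ℝ) := by
      field_simp
    rw [h2]
    have hsq : Real.sqrt (4 * v) ≤ Real.sqrt (2 * π * v) := by
      apply Real.sqrt_le_sqrt
      nlinarith [Real.pi_gt_three, v.coe_nonneg]
    have h4 : Real.sqrt (4 * v) = 2 * Real.sqrt v := by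
      rw [show (4 : ℝ) * v = 2 ^ 2 * v by ring, Real.sqrt_mul (by positivity) _,
        Real.sqrt_sq (by norm_num)]
    have hpos : (0:ℝ) < 2 * Real.sqrt v := by positivity
    have hinv : (Real.sqrt (2 * π * v))⁻¹ ≤ (2 * Real.sqrt v)⁻¹ := by
      apply inv_anti₀ hpos
      rw [← h4]; exact hsq
    calc (Real.sqrt (2 * π * v))⁻¹ * (2 * (v:ℝ))
        ≤ (2 * Real.sqrt v)⁻¹ * (2 * (v:ℝ)) := by
          apply mul_le_mul_of_nonneg_right hinv (by positivity)
      _ = (v:ℝ) / Real.sqrt v := by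
          field_simp
      _ = Real.sqrt v := Real.div_sqrt

lemma lint_inv_sqrt {a b : ℝ} (ha : 0 ≤ a) (hab : a ≤ b) :
    ∫⁻ u in Set.Ioc a b, ENNReal.ofReal (1 / Real.sqrt u) ∂volume
      = ENNReal.ofReal (2 * Real.sqrt b - 2 * Real.sqrt a) := by
  have hcong : ∀ u ∈ Set.Ioc a b, ENNReal.ofReal (1 / Real.sqrt u)
      = ENNReal.ofReal (u ^ (-(1/2) : ℝ)) := by
    intro u hu
    have hu0 : 0 < u := lt_of_le_of_lt ha hu.1
    rw [Real.rpow_neg hu0.le, ← Real.sqrt_eq_rpow, one_div]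
  rw [setLIntegral_congr_fun measurableSet_Ioc hcong]
  have hint : IntegrableOn (fun u : ℝ => u ^ (-(1/2) : ℝ)) (Set.Ioc a b) :=
    (intervalIntegral.intervalIntegrable_rpow' (by norm_num)).1
  rw [← ofReal_integral_eq_lintegral_ofReal hint ?nn]
  case nn =>
    refine (ae_restrict_iff' measurableSet_Ioc).mpr (ae_of_all _ fun u hu => ?_)
    exact Real.rpow_nonneg (le_of_lt (lt_of_le_of_lt ha hu.1)) _
  congr 1
  rw [← intervalIntegral.integral_of_le hab, integral_rpow (Or.inl (by norm_num))]
  have h12 : (-(1/2) : ℝ) + 1 = 1/2 := by norm_num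
  rw [h12, ← Real.sqrt_eq_rpow, ← Real.sqrt_eq_rpow]
  ring

lemma key_K {t : ℝ} (ht : 0 ≤ t) (r : ℝ) :
    ∫⁻ s in Set.Ioc (0:ℝ) t, (if s < r then ENNReal.ofReal (1 / Real.sqrt (r - s)) else 0) ∂volume
      ≤ ENNReal.ofReal (2 * Real.sqrt t) := by
  rcases eq_or_lt_of_le ht with rfl | ht0
  · simp
  by_cases hr : 0 < r
  swap
  · have hz : ∀ s ∈ Set.Ioc (0:ℝ) t,
        (if s < r then ENNReal.ofReal (1 / Real.sqrt (r - s)) else 0) ≤ 0 := by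
      intro s hs
      rw [if_neg (fun h => hr (lt_trans hs.1 h))]
    calc ∫⁻ s in Set.Ioc (0:ℝ) t, _ ∂volume
        ≤ ∫⁻ _ in Set.Ioc (0:ℝ) t, (0:ℝ≥0∞) ∂volume := setLIntegral_mono measurable_const hz
      _ = 0 := lintegral_zero
      _ ≤ _ := zero_le
  · set a := max (r - t) 0 with ha_def
    have ha0 : 0 ≤ a := le_max_right _ _
    have har : a < r := by
      rw [ha_def, max_lt_iff]
      exact ⟨by linarith, hr⟩
    have hHmeas : Measurable ((Set.Ico a r).indicator
        (fun u => ENNReal.ofReal (1 / Real.sqrt u))) := by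
      apply Measurable.indicator _ measurableSet_Ico
      fun_prop
    calc ∫⁻ s in Set.Ioc (0:ℝ) t,
          (if s < r then ENNReal.ofReal (1 / Real.sqrt (r - s)) else 0) ∂volume
        = ∫⁻ s, (Set.Ioc (0:ℝ) t).indicator
            (fun s => if s < r then ENNReal.ofReal (1 / Real.sqrt (r - s)) else 0) s ∂volume := by
          rw [lintegral_indicator measurableSet_Ioc]
      _ ≤ ∫⁻ s, (Set.Ico a r).indicator
            (fun u => ENNReal.ofReal (1 / Real.sqrt u)) (r - s) ∂volume := by
          apply lintegral_mono
          intro s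
          by_cases hmem : s ∈ Set.Ioc (0:ℝ) t
          · rw [Set.indicator_of_mem hmem]
            by_cases hsr : s < r
            · rw [if_pos hsr]
              show ENNReal.ofReal (1 / Real.sqrt (r - s)) ≤ (Set.Ico a r).indicator
                (fun u => ENNReal.ofReal (1 / Real.sqrt u)) (r - s)
              rw [Set.indicator_of_mem]
              exact ⟨max_le (by linarith [hmem.2]) (by linarith), by linarith [hmem.1]⟩
            · rw [if_neg hsr]; exact zero_le
          · rw [Set.indicator_of_notMem hmem]; exact zero_le
      _ = ∫⁻ u, (Set.Ico a r).indicator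
            (fun u => ENNReal.ofReal (1 / Real.sqrt u)) u ∂volume :=
          (Measure.measurePreserving_sub_left volume r).lintegral_comp hHmeas
      _ = ∫⁻ u in Set.Ico a r, ENNReal.ofReal (1 / Real.sqrt u) ∂volume := by
          rw [lintegral_indicator measurableSet_Ico]
      _ = ∫⁻ u in Set.Ioc a r, ENNReal.ofReal (1 / Real.sqrt u) ∂volume := by
          rw [Measure.restrict_congr_set Ico_ae_eq_Ioc]
      _ = ENNReal.ofReal (2 * Real.sqrt r - 2 * Real.sqrt a) := lint_inv_sqrt ha0 har.le
      _ ≤ ENNReal.ofReal (2 * Real.sqrt t) := by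
          apply ENNReal.ofReal_le_ofReal
          have h1 : r ≤ a + t := by
            have := le_max_left (r - t) (0:ℝ)
            rw [ha_def]; linarith
          have h3 : Real.sqrt r ≤ Real.sqrt (a + t) := Real.sqrt_le_sqrt h1
          have h4 : Real.sqrt (a + t) ≤ Real.sqrt a + Real.sqrt t := by
            rw [show Real.sqrt a + Real.sqrt t
                = Real.sqrt ((Real.sqrt a + Real.sqrt t) ^ 2) by
              rw [Real.sqrt_sq (by positivity)]]
            apply Real.sqrt_le_sqrt
            nlinarith [Real.sq_sqrt ha0, Real.sq_sqrt ht, Real.sqrt_nonneg a,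
              Real.sqrt_nonneg t]
          linarith

lemma lintegral_comp_indepFun {Ω E : Type*} [MeasurableSpace Ω] [MeasurableSpace E]
    (P : Measure Ω) [IsProbabilityMeasure P] {X : Ω → ℝ} {Y : Ω → E}
    (hX : Measurable X) (hY : Measurable Y) (h : IndepFun X Y P)
    {g : ℝ × E → ℝ≥0∞} (hg : Measurable g) :
    ∫⁻ ω, g (X ω, Y ω) ∂P = ∫⁻ r, ∫⁻ ω, g (r, Y ω) ∂P ∂(P.map X) := by
  have : IsProbabilityMeasure (P.map Y) := Measure.isProbabilityMeasure_map hY.aemeasurable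
  have : IsProbabilityMeasure (P.map X) := Measure.isProbabilityMeasure_map hX.aemeasurable
  rw [← lintegral_map hg (hX.prodMk hY),
    (indepFun_iff_map_prod_eq_prod_map_map hX.aemeasurable hY.aemeasurable).mp h,
    lintegral_prod _ hg.aemeasurable]
  exact lintegral_congr fun r => lintegral_map (hg.comp measurable_prodMk_left) hY

lemma measurable_g_aux {Ω : Type*} [MeasurableSpace Ω] {W : ℝ → Ω → ℝ}
    (hU : Measurable (Function.uncurry W)) (s : ℝ) :
    Measurable (fun p : ℝ × Ω =>
      if s < p.1 then
        ENNReal.ofReal (|Function.uncurry W p - W s p.2| / (p.1 - s)) else 0) := by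
  have h1 : Measurable fun p : ℝ × Ω => W s p.2 :=
    hU.comp (measurable_const.prodMk measurable_snd)
  apply Measurable.ite (measurableSet_lt measurable_const measurable_fst)
  · apply ENNReal.measurable_ofReal.comp
    apply Measurable.div
    · exact (hU.sub h1).abs
    · exact measurable_fst.sub measurable_const
  · exact measurable_const

end Aux

/-- For the process `Z_t = (β_t / (τ - t))·1_{t < τ}`, one has `E[∫₀ᵗ |Z_s| ds] < ∞`
for every `t ≥ 0`. -/


theorem Z_expected_integral_finite {Ω : Type*} [MeasurableSpace Ω] (P : Measure Ω)
    [IsProbabilityMeasure P] [P.IsComplete]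
    (W : ℝ → Ω → ℝ) (hW : IsStdBrownianMotion P W)
    (τ : Ω → ℝ) (hτ_meas : Measurable τ) (hτ_pos : ∀ ω, 0 < τ ω)
    (hindep : Indep (sigmaGen τ) (⨆ t : ℝ, sigmaGen (W t)) P)
    (t : ℝ) (ht : 0 ≤ t) :
    (∫⁻ ω, ∫⁻ s in Set.Ioc (0 : ℝ) t,
        ENNReal.ofReal
          |if s < τ ω then infoProc W τ s ω / (τ ω - s) else 0| ∂volume ∂P) < ⊤ := by
  obtain ⟨hWmeas, hW0, hWcont, -, hWgauss⟩ := hW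
  have hm : (⨆ u : ℝ, sigmaGen (W u)) ≤ ‹MeasurableSpace Ω› :=
    iSup_le fun u => measurable_iff_comap_le.mp (hWmeas u)
  have hWm : ∀ u : ℝ, Measurable[⨆ u : ℝ, sigmaGen (W u)] (W u) := fun u =>
    measurable_iff_comap_le.mpr (le_iSup (fun v : ℝ => sigmaGen (W v)) u)
  have hUm := measurable_uncurry_of_continuous_of_measurable
    (m := ⨆ u : ℝ, sigmaGen (W u)) hWcont hWm
  have hU : Measurable (Function.uncurry W) :=
    measurable_uncurry_of_continuous_of_measurable hWcont hWmeas
  -- Gaussian bounds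
  have hG : ∀ a b : ℝ, 0 ≤ a → a ≤ b →
      ∫⁻ ω, ENNReal.ofReal |W b ω - W a ω| ∂P ≤ ENNReal.ofReal (Real.sqrt (b - a)) := by
    intro a b ha hab
    have hXm : Measurable fun ω => W b ω - W a ω := (hWmeas b).sub (hWmeas a)
    have h1 : ∫⁻ ω, ENNReal.ofReal |W b ω - W a ω| ∂P
        = ∫⁻ x, ENNReal.ofReal |x| ∂(Measure.map (fun ω => W b ω - W a ω) P) :=
      (lintegral_map (ENNReal.measurable_ofReal.comp measurable_abs) hXm).symm
    rw [h1, hWgauss a b ha hab]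
    refine (lintegral_abs_gaussianReal _).trans (le_of_eq ?_)
    rw [Real.coe_toNNReal _ (by linarith)]
  have hG0 : ∀ s : ℝ, 0 ≤ s →
      ∫⁻ ω, ENNReal.ofReal |W s ω| ∂P ≤ ENNReal.ofReal (Real.sqrt s) := by
    intro s hs
    have := hG 0 s le_rfl hs
    simpa [hW0] using this
  -- independence as IndepFun with the id map into (Ω, m)
  have hIF : @IndepFun Ω ℝ Ω _ _ (⨆ u : ℝ, sigmaGen (W u)) τ id P := by
    have h2 : Indep (sigmaGen τ)
        (MeasurableSpace.comap id (⨆ u : ℝ, sigmaGen (W u))) P := by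
      rwa [MeasurableSpace.comap_id]
    exact h2
  -- pointwise bound
  have hpt : ∀ s ∈ Set.Ioc (0:ℝ) t, ∀ ω,
      ENNReal.ofReal |if s < τ ω then infoProc W τ s ω / (τ ω - s) else 0|
        ≤ ENNReal.ofReal (|W s ω| / s)
          + (if s < τ ω then ENNReal.ofReal (|W (τ ω) ω - W s ω| / (τ ω - s)) else 0) := by
    intro s hs ω
    by_cases h : s < τ ω
    · rw [if_pos h, if_pos h]
      have hs0 : 0 < s := hs.1
      have hrpos : 0 < τ ω := lt_trans hs0 h
      have hrs : 0 < τ ω - s := by linarith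
      have hmax : max (τ ω) s = τ ω := max_eq_left h.le
      rw [infoProc, hmax]
      have hkey : |(W s ω - s / τ ω * W (τ ω) ω) / (τ ω - s)|
          ≤ |W s ω| / s + |W (τ ω) ω - W s ω| / (τ ω - s) := by
        set x := W s ω with hx
        set y := W (τ ω) ω with hy
        set r := τ ω with hrr
        have hsr1 : s / r ≤ 1 := div_le_one_of_le₀ h.le hrpos.le
        have hsr0 : 0 ≤ s / r := div_nonneg hs0.le hrpos.le
        have h1 : |x - s / r * y| ≤ (1 - s / r) * |x| + (s / r) * |y - x| := by
          have e : x - s / r * y = (1 - s / r) * x - (s / r) * (y - x) := by ring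
          rw [e]
          calc |(1 - s/r) * x - (s/r) * (y - x)|
              ≤ |(1 - s/r) * x| + |(s/r) * (y - x)| := abs_sub _ _
            _ = (1 - s/r) * |x| + (s/r) * |y - x| := by
                rw [abs_mul, abs_mul, abs_of_nonneg (by linarith), abs_of_nonneg hsr0]
        have h2 : (1 - s / r) / (r - s) = 1 / r := by
          rw [show 1 - s / r = (r - s) / r by field_simp]
          field_simp
        rw [abs_div, abs_of_pos hrs]
        calc |x - s / r * y| / (r - s)
            ≤ ((1 - s/r) * |x| + (s/r) * |y - x|) / (r - s) := by gcongr
          _ = |x| * ((1 - s/r) / (r - s)) + |y - x| * ((s/r) / (r - s)) := by ring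
          _ = |x| * (1 / r) + |y - x| * ((s/r) / (r - s)) := by rw [h2]
          _ ≤ |x| * (1 / s) + |y - x| * (1 / (r - s)) := by
              apply add_le_add
              · exact mul_le_mul_of_nonneg_left
                  (one_div_le_one_div_of_le hs0 h.le) (abs_nonneg _)
              · apply mul_le_mul_of_nonneg_left _ (abs_nonneg _)
                rw [div_le_div_iff_of_pos_right hrs]
                exact hsr1
          _ = |x| / s + |y - x| / (r - s) := by ring
      calc ENNReal.ofReal |(W s ω - s / τ ω * W (τ ω) ω) / (τ ω - s)|
          ≤ ENNReal.ofReal (|W s ω| / s + |W (τ ω) ω - W s ω| / (τ ω - s)) :=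
            ENNReal.ofReal_le_ofReal hkey
        _ = ENNReal.ofReal (|W s ω| / s)
            + ENNReal.ofReal (|W (τ ω) ω - W s ω| / (τ ω - s)) :=
            ENNReal.ofReal_add (by positivity) (by positivity)
    · rw [if_neg h, if_neg h]
      simp
  -- measurability
  have hAm : Measurable (Function.uncurry fun (ω : Ω) (s : ℝ) =>
      ENNReal.ofReal (|W s ω| / s)) := by
    have h1 : Measurable fun p : Ω × ℝ => W p.2 p.1 :=
      hU.comp (measurable_snd.prodMk measurable_fst)
    exact ENNReal.measurable_ofReal.comp (h1.abs.div measurable_snd)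
  have hBm : Measurable (Function.uncurry fun (ω : Ω) (s : ℝ) =>
      if s < τ ω then ENNReal.ofReal (|W (τ ω) ω - W s ω| / (τ ω - s)) else 0) := by
    have h1 : Measurable fun p : Ω × ℝ => W p.2 p.1 :=
      hU.comp (measurable_snd.prodMk measurable_fst)
    have h2 : Measurable fun p : Ω × ℝ => W (τ p.1) p.1 :=
      hU.comp ((hτ_meas.comp measurable_fst).prodMk measurable_fst)
    apply Measurable.ite (measurableSet_lt measurable_snd (hτ_meas.comp measurable_fst))
    · exact ENNReal.measurable_ofReal.comp
        ((h2.sub h1).abs.div ((hτ_meas.comp measurable_fst).sub measurable_snd))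
    · exact measurable_const
  have hA1 : ∀ ω, Measurable fun s : ℝ => ENNReal.ofReal (|W s ω| / s) := fun ω =>
    ENNReal.measurable_ofReal.comp (((hWcont ω).measurable).abs.div measurable_id)
  have hB1 : ∀ ω, Measurable fun s : ℝ =>
      (if s < τ ω then ENNReal.ofReal (|W (τ ω) ω - W s ω| / (τ ω - s)) else 0) := fun ω => by
    apply Measurable.ite measurableSet_Iio
    · exact ENNReal.measurable_ofReal.comp
        (((measurable_const.sub (hWcont ω).measurable).abs).div
          (measurable_const.sub measurable_id))
    · exact measurable_const
  -- Term A bound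
  have hTA : ∫⁻ ω, ∫⁻ s in Set.Ioc (0:ℝ) t, ENNReal.ofReal (|W s ω| / s) ∂volume ∂P
      ≤ ENNReal.ofReal (2 * Real.sqrt t) := by
    rw [lintegral_lintegral_swap hAm.aemeasurable]
    calc ∫⁻ s in Set.Ioc (0:ℝ) t, ∫⁻ ω, ENNReal.ofReal (|W s ω| / s) ∂P ∂volume
        ≤ ∫⁻ s in Set.Ioc (0:ℝ) t, ENNReal.ofReal (1 / Real.sqrt s) ∂volume := by
          refine setLIntegral_mono (by fun_prop) fun s hs => ?_
          have hs0 : 0 < s := hs.1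
          have e : ∀ ω : Ω, ENNReal.ofReal (|W s ω| / s)
              = ENNReal.ofReal |W s ω| * ENNReal.ofReal s⁻¹ := fun ω => by
            rw [div_eq_mul_inv, ENNReal.ofReal_mul (abs_nonneg _)]
          calc ∫⁻ ω, ENNReal.ofReal (|W s ω| / s) ∂P
              = (∫⁻ ω, ENNReal.ofReal |W s ω| ∂P) * ENNReal.ofReal s⁻¹ := by
                simp_rw [e]
                exact lintegral_mul_const _ (ENNReal.measurable_ofReal.comp (hWmeas s).abs)
            _ ≤ ENNReal.ofReal (Real.sqrt s) * ENNReal.ofReal s⁻¹ :=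
                mul_le_mul_left (hG0 s hs0.le) _
            _ = ENNReal.ofReal (1 / Real.sqrt s) := by
                rw [← ENNReal.ofReal_mul (Real.sqrt_nonneg s), ← div_eq_mul_inv,
                  Real.sqrt_div_self']
      _ = ENNReal.ofReal (2 * Real.sqrt t - 2 * Real.sqrt 0) := lint_inv_sqrt le_rfl ht
      _ ≤ ENNReal.ofReal (2 * Real.sqrt t) := ENNReal.ofReal_le_ofReal (by
          rw [Real.sqrt_zero]; linarith)
  -- Term B bound
  have hPτ : IsProbabilityMeasure (P.map τ) := Measure.isProbabilityMeasure_map hτ_meas.aemeasurable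
  have hDm : Measurable (Function.uncurry fun (s r : ℝ) =>
      if s < r then ENNReal.ofReal (1 / Real.sqrt (r - s)) else 0) := by
    apply Measurable.ite (measurableSet_lt measurable_fst measurable_snd)
    · fun_prop
    · exact measurable_const
  have hJ : ∀ s : ℝ, 0 ≤ s →
      ∫⁻ ω, (if s < τ ω then ENNReal.ofReal (|W (τ ω) ω - W s ω| / (τ ω - s)) else 0) ∂P
        ≤ ∫⁻ r, (if s < r then ENNReal.ofReal (1 / Real.sqrt (r - s)) else 0) ∂(P.map τ) := by
    intro s hs
    have hgm := @measurable_g_aux Ω (⨆ u : ℝ, sigmaGen (W u)) W hUm s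
    have key := @lintegral_comp_indepFun Ω Ω _ (⨆ u : ℝ, sigmaGen (W u)) P _ τ id hτ_meas
      (measurable_id'' hm) hIF _ hgm
    have hBg : ∀ ω : Ω,
        (if s < τ ω then ENNReal.ofReal (|W (τ ω) ω - W s ω| / (τ ω - s)) else 0)
          = (fun p : ℝ × Ω =>
              if s < p.1 then
                ENNReal.ofReal (|Function.uncurry W p - W s p.2| / (p.1 - s)) else 0)
            (τ ω, ω) := fun ω => rfl
    calc ∫⁻ ω, (if s < τ ω then ENNReal.ofReal (|W (τ ω) ω - W s ω| / (τ ω - s)) else 0) ∂P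
        = ∫⁻ r, ∫⁻ ω, (if s < r then
            ENNReal.ofReal (|W r ω - W s ω| / (r - s)) else 0) ∂P ∂(P.map τ) := by
          simp_rw [hBg]
          exact key
      _ ≤ ∫⁻ r, (if s < r then ENNReal.ofReal (1 / Real.sqrt (r - s)) else 0) ∂(P.map τ) := by
          apply lintegral_mono
          intro r
          by_cases hsr : s < r
          · simp only [if_pos hsr]
            have hrs : 0 < r - s := by linarith
            have e : ∀ ω : Ω, ENNReal.ofReal (|W r ω - W s ω| / (r - s))
                = ENNReal.ofReal |W r ω - W s ω| * ENNReal.ofReal (r - s)⁻¹ := fun ω => by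
              rw [div_eq_mul_inv, ENNReal.ofReal_mul (abs_nonneg _)]
            calc ∫⁻ ω, ENNReal.ofReal (|W r ω - W s ω| / (r - s)) ∂P
                = (∫⁻ ω, ENNReal.ofReal |W r ω - W s ω| ∂P) * ENNReal.ofReal (r - s)⁻¹ := by
                  simp_rw [e]
                  exact lintegral_mul_const _
                    (ENNReal.measurable_ofReal.comp ((hWmeas r).sub (hWmeas s)).abs)
              _ ≤ ENNReal.ofReal (Real.sqrt (r - s)) * ENNReal.ofReal (r - s)⁻¹ :=
                  mul_le_mul_left (hG s r hs hsr.le) _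
              _ = ENNReal.ofReal (1 / Real.sqrt (r - s)) := by
                  rw [← ENNReal.ofReal_mul (Real.sqrt_nonneg _), ← div_eq_mul_inv,
                    Real.sqrt_div_self']
          · simp only [if_neg hsr]
            simp
  have hTB : ∫⁻ ω, ∫⁻ s in Set.Ioc (0:ℝ) t,
      (if s < τ ω then ENNReal.ofReal (|W (τ ω) ω - W s ω| / (τ ω - s)) else 0) ∂volume ∂P
      ≤ ENNReal.ofReal (2 * Real.sqrt t) := by
    rw [lintegral_lintegral_swap hBm.aemeasurable]
    calc ∫⁻ s in Set.Ioc (0:ℝ) t, ∫⁻ ω,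
          (if s < τ ω then ENNReal.ofReal (|W (τ ω) ω - W s ω| / (τ ω - s)) else 0) ∂P ∂volume
        ≤ ∫⁻ s in Set.Ioc (0:ℝ) t, ∫⁻ r,
            (if s < r then ENNReal.ofReal (1 / Real.sqrt (r - s)) else 0) ∂(P.map τ) ∂volume :=
          setLIntegral_mono hDm.lintegral_prod_right fun s hs => hJ s hs.1.le
      _ = ∫⁻ r, ∫⁻ s in Set.Ioc (0:ℝ) t,
            (if s < r then ENNReal.ofReal (1 / Real.sqrt (r - s)) else 0) ∂volume ∂(P.map τ) :=
          lintegral_lintegral_swap hDm.aemeasurable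
      _ ≤ ∫⁻ _, ENNReal.ofReal (2 * Real.sqrt t) ∂(P.map τ) :=
          lintegral_mono fun r => key_K ht r
      _ = ENNReal.ofReal (2 * Real.sqrt t) := by
          simp [measure_univ]
  -- assemble
  have hmain : (∫⁻ ω, ∫⁻ s in Set.Ioc (0 : ℝ) t,
      ENNReal.ofReal |if s < τ ω then infoProc W τ s ω / (τ ω - s) else 0| ∂volume ∂P)
      ≤ ENNReal.ofReal (2 * Real.sqrt t) + ENNReal.ofReal (2 * Real.sqrt t) := by
    calc (∫⁻ ω, ∫⁻ s in Set.Ioc (0 : ℝ) t,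
        ENNReal.ofReal |if s < τ ω then infoProc W τ s ω / (τ ω - s) else 0| ∂volume ∂P)
        ≤ ∫⁻ ω, ∫⁻ s in Set.Ioc (0 : ℝ) t,
            (ENNReal.ofReal (|W s ω| / s)
              + (if s < τ ω then
                  ENNReal.ofReal (|W (τ ω) ω - W s ω| / (τ ω - s)) else 0)) ∂volume ∂P := by
          refine lintegral_mono fun ω => setLIntegral_mono ((hA1 ω).add (hB1 ω))
            fun s hs => hpt s hs ω
      _ = ∫⁻ ω, ((∫⁻ s in Set.Ioc (0 : ℝ) t, ENNReal.ofReal (|W s ω| / s) ∂volume)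
            + ∫⁻ s in Set.Ioc (0 : ℝ) t,
              (if s < τ ω then
                ENNReal.ofReal (|W (τ ω) ω - W s ω| / (τ ω - s)) else 0) ∂volume) ∂P :=
          lintegral_congr fun ω => lintegral_add_left (hA1 ω) _
      _ = (∫⁻ ω, ∫⁻ s in Set.Ioc (0 : ℝ) t, ENNReal.ofReal (|W s ω| / s) ∂volume ∂P)
            + ∫⁻ ω, ∫⁻ s in Set.Ioc (0 : ℝ) t,
              (if s < τ ω then
                ENNReal.ofReal (|W (τ ω) ω - W s ω| / (τ ω - s)) else 0) ∂volume ∂P :=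
          lintegral_add_left hAm.lintegral_prod_right _
      _ ≤ ENNReal.ofReal (2 * Real.sqrt t) + ENNReal.ofReal (2 * Real.sqrt t) :=
          add_le_add hTA hTB
  exact lt_of_le_of_lt hmain
    (ENNReal.add_lt_top.mpr ⟨ENNReal.ofReal_lt_top, ENNReal.ofReal_lt_top⟩)
end
end
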